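/- For a positive integer n, the dual lattice O* of O_{n²} with respect to the trace form inside ℚ × ℚ is spanned over ℤ by f₁ = (1,0) and f₂ = (1/n, −1/n); moreover the quotient group O*/O_{n²} is isomorphic to ℤ/n²ℤ if n is odd, and to ℤ/2ℤ ⊕ ℤ/(n²/2)ℤ if n is even. -/

import Mathlib

namespace DualLatticeAux

variable (n : ℕ)

def OLgrp : AddSubgroup (ℚ × ℚ) where
  carrier := {v | ∃ x y : ℤ, v = ((x : ℚ), (y : ℚ)) ∧ (n : ℤ) ∣ (x - y)}
  zero_mem' := ⟨0, 0, by simp; rfl, by simp⟩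
  add_mem' := by
    rintro a b ⟨x, y, rfl, hxy⟩ ⟨x', y', rfl, hxy'⟩
    refine ⟨x + x', y + y', by push_cast; simp [Prod.ext_iff], ?_⟩
    have := dvd_add hxy hxy'; convert this using 1; rfl; ring
  neg_mem' := by
    rintro a ⟨x, y, rfl, hxy⟩
    refine ⟨-x, -y, by push_cast; simp [Prod.ext_iff], ?_⟩
    have := hxy.neg_right; convert this using 1; rfl; ring

def Odgrp : AddSubgroup (ℚ × ℚ) where
  carrier := {v | ∃ a b : ℤ, v = a • ((1 : ℚ), (0 : ℚ)) + b • ((1 / n : ℚ), -(1 / n : ℚ))}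
  zero_mem' := ⟨0, 0, by simp⟩
  add_mem' := by
    rintro v w ⟨a, b, rfl⟩ ⟨a', b', rfl⟩
    exact ⟨a + a', b + b', by simp only [Prod.smul_mk, Prod.mk_add_mk, smul_eq_mul, zsmul_eq_mul, Prod.mk.injEq]; push_cast; constructor <;> ring⟩
  neg_mem' := by
    rintro v ⟨a, b, rfl⟩
    exact ⟨-a, -b, by simp only [Prod.smul_mk, Prod.mk_add_mk, smul_eq_mul, zsmul_eq_mul, Prod.neg_mk, Prod.mk.injEq]; push_cast; constructor <;> ring⟩

lemma vec_eq (a b : ℤ) :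
    a • ((1 : ℚ), (0 : ℚ)) + b • ((1 / n : ℚ), -(1 / n : ℚ))
      = (((a : ℚ) + (b : ℚ) / n, -((b : ℚ) / n)) : ℚ × ℚ) := by
  simp only [Prod.smul_mk, Prod.mk_add_mk, smul_eq_mul, zsmul_eq_mul, Prod.mk.injEq]
  constructor <;> ring

lemma mem_OL_iff (hn : 0 < n) (a b : ℤ) :
    (a • ((1 : ℚ), (0 : ℚ)) + b • ((1 / n : ℚ), -(1 / n : ℚ))) ∈ OLgrp n ↔
      ∃ c : ℤ, b = n * c ∧ (n : ℤ) ∣ a + 2 * c := by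
  have hn0 : (n : ℚ) ≠ 0 := by positivity
  rw [vec_eq]
  constructor
  · rintro ⟨x, y, hv, hd⟩
    rw [Prod.ext_iff] at hv
    obtain ⟨h1, h2⟩ := hv
    have hb : (b : ℚ) = -(n * y) := by field_simp at h2 ⊢; linarith
    have hbz : b = -(n * y) := by exact_mod_cast hb
    refine ⟨-y, by push_cast; linarith, ?_⟩
    simp only at h1 h2
    have hx : (x : ℚ) = a + -y := by rw [← h1, hb]; field_simp
    have hxz : x = a + -y := by exact_mod_cast hx
    have : a + 2 * -y = x - y := by omega
    rw [this]; exact hd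
  · rintro ⟨c, rfl, k, hk⟩
    refine ⟨a + c, -c, ?_, ⟨k, by linarith⟩⟩
    rw [Prod.ext_iff]
    constructor
    · push_cast; field_simp
    · push_cast; field_simp


lemma odd_dvd_iff (ho : Odd n) (a b : ℤ) :
    ((n : ℤ) ^ 2 ∣ n * a + (n + 2) * b) ↔ ∃ c : ℤ, b = n * c ∧ (n : ℤ) ∣ a + 2 * c := by
  obtain ⟨t, ht⟩ := ho
  have hnz : (n : ℤ) = 2 * t + 1 := by exact_mod_cast ht
  constructor
  · rintro ⟨d, hd⟩
    have h2b : (n : ℤ) ∣ 2 * b := ⟨n * d - a - b, by nlinarith [hd]⟩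
    have hb : (n : ℤ) ∣ b := by
      obtain ⟨e, he⟩ := h2b
      exact ⟨(t + 1) * e - b, by linear_combination (t + 1 : ℤ) * he + b * hnz⟩
    obtain ⟨c, rfl⟩ := hb
    refine ⟨c, rfl, d - c, ?_⟩
    have hn0 : (n : ℤ) ≠ 0 := by omega
    have : (n : ℤ) * (a + 2 * c) = n * (n * (d - c)) := by ring_nf; nlinarith [hd]
    exact mul_left_cancel₀ hn0 this
  · rintro ⟨c, rfl, k, hk⟩
    exact ⟨k + c, by ring_nf; nlinarith [hk]⟩

lemma even_dvd_iff (m : ℕ) (a b : ℤ) :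
    ((2 : ℤ) ∣ a ∧ (2 * (m : ℤ) ^ 2 ∣ m * a + b)) ↔
      ∃ c : ℤ, b = (2 * m) * c ∧ (2 * (m : ℤ)) ∣ a + 2 * c := by
  constructor
  · rintro ⟨⟨s, hs⟩, ⟨t, ht⟩⟩
    exact ⟨m * t - s, by nlinarith [hs, ht], ⟨t, by nlinarith [hs, ht]⟩⟩
  · rintro ⟨c, rfl, ⟨k, hk⟩⟩
    exact ⟨⟨m * k - c, by nlinarith [hk]⟩, ⟨k, by nlinarith [hk]⟩⟩

def φodd : ℤ × ℤ →+ ZMod (n ^ 2) where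
  toFun p := ((n * p.1 + (n + 2) * p.2 : ℤ) : ZMod (n ^ 2))
  map_zero' := by simp
  map_add' p q := by simp only [Prod.fst_add, Prod.snd_add]; push_cast; ring

lemma φodd_surj (hn : 0 < n) (ho : Odd n) : Function.Surjective (φodd n) := by
  haveI : NeZero (n ^ 2) := ⟨by positivity⟩
  obtain ⟨t, ht⟩ := ho
  have hnz : (n : ℤ) = 2 * t + 1 := by exact_mod_cast ht
  intro z
  refine ⟨((z.val : ℤ) * (-(t + 2)), (z.val : ℤ) * (t + 1)), ?_⟩
  show (((n : ℤ) * ((z.val : ℤ) * (-(t + 2))) + ((n : ℤ) + 2) * ((z.val : ℤ) * (t + 1)) : ℤ) : ZMod (n ^ 2)) = z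
  have key : (n : ℤ) * ((z.val : ℤ) * (-(t + 2))) + ((n : ℤ) + 2) * ((z.val : ℤ) * (t + 1)) = (z.val : ℤ) := by
    rw [hnz]; ring
  rw [key]
  simp [ZMod.natCast_val, ZMod.cast_id]

lemma φodd_ker (p : ℤ × ℤ) :
    φodd n p = 0 ↔ ((n : ℤ) ^ 2 ∣ n * p.1 + (n + 2) * p.2) := by
  show (((n : ℤ) * p.1 + ((n : ℤ) + 2) * p.2 : ℤ) : ZMod (n ^ 2)) = 0 ↔ _
  rw [ZMod.intCast_zmod_eq_zero_iff_dvd]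
  push_cast
  rfl

def φeven (m : ℕ) : ℤ × ℤ →+ ZMod 2 × ZMod (2 * m ^ 2) where
  toFun p := (((p.1 : ℤ) : ZMod 2), ((m * p.1 + p.2 : ℤ) : ZMod (2 * m ^ 2)))
  map_zero' := by simp
  map_add' p q := by
    simp only [Prod.mk_add_mk, Prod.mk.injEq]
    constructor
    · simp only [Prod.fst_add]; push_cast; ring
    · simp only [Prod.fst_add, Prod.snd_add]; push_cast; ring

lemma φeven_surj (m : ℕ) (hm : 0 < m) : Function.Surjective (φeven m) := by
  haveI : NeZero (2 * m ^ 2) := ⟨by positivity⟩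
  rintro ⟨z₁, z₂⟩
  refine ⟨((z₁.val : ℤ), (z₂.val : ℤ) - m * (z₁.val : ℤ)), ?_⟩
  show ((((z₁.val : ℤ) : ℤ) : ZMod 2), (((m : ℤ) * (z₁.val : ℤ) + ((z₂.val : ℤ) - m * (z₁.val : ℤ)) : ℤ) : ZMod (2 * m ^ 2))) = (z₁, z₂)
  simp only [Prod.mk.injEq]
  constructor
  · simp [ZMod.natCast_val, ZMod.cast_id]
  · have : (m : ℤ) * (z₁.val : ℤ) + ((z₂.val : ℤ) - m * (z₁.val : ℤ)) = (z₂.val : ℤ) := by ring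
    rw [this]; simp [ZMod.natCast_val, ZMod.cast_id]

lemma φeven_ker (m : ℕ) (p : ℤ × ℤ) :
    φeven m p = 0 ↔ ((2 : ℤ) ∣ p.1 ∧ (2 * (m : ℤ) ^ 2 ∣ m * p.1 + p.2)) := by
  show (((p.1 : ℤ) : ZMod 2), (((m : ℤ) * p.1 + p.2 : ℤ) : ZMod (2 * m ^ 2))) = 0 ↔ _
  rw [Prod.ext_iff]
  simp only [Prod.fst_zero, Prod.snd_zero]
  rw [ZMod.intCast_zmod_eq_zero_iff_dvd, ZMod.intCast_zmod_eq_zero_iff_dvd]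
  push_cast
  rfl


def gmap : ℤ × ℤ →+ Odgrp n where
  toFun p := ⟨p.1 • ((1 : ℚ), (0 : ℚ)) + p.2 • ((1 / n : ℚ), -(1 / n : ℚ)), p.1, p.2, rfl⟩
  map_zero' := by ext <;> simp
  map_add' p q := by
    apply Subtype.ext
    show ((p.1 + q.1 : ℤ) • ((1:ℚ),(0:ℚ)) + (p.2 + q.2 : ℤ) • ((1/n:ℚ), -(1/n:ℚ)))
        = (p.1 • ((1:ℚ),(0:ℚ)) + p.2 • ((1/n:ℚ), -(1/n:ℚ)))
          + (q.1 • ((1:ℚ),(0:ℚ)) + q.2 • ((1/n:ℚ), -(1/n:ℚ)))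
    simp only [add_zsmul]; abel

lemma gmap_bij (hn : 0 < n) : Function.Bijective (gmap n) := by
  have hn0 : (n : ℚ) ≠ 0 := by positivity
  constructor
  · rintro ⟨a, b⟩ ⟨a', b'⟩ h
    have h' : (a • ((1:ℚ),(0:ℚ)) + b • ((1/n:ℚ), -(1/n:ℚ))) = (a' • ((1:ℚ),(0:ℚ)) + b' • ((1/n:ℚ), -(1/n:ℚ))) := congrArg Subtype.val h
    rw [vec_eq, vec_eq, Prod.mk.injEq] at h'
    obtain ⟨h1, h2⟩ := h'
    have hbz : b = b' := by
      field_simp at h2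
      exact_mod_cast neg_inj.mp h2
    have hb : (b : ℚ) = b' := by exact_mod_cast hbz
    have ha : (a : ℚ) = a' := by rw [hb] at h1; linarith
    have haz : a = a' := by exact_mod_cast ha
    simp [haz, hbz]
  · rintro ⟨v, a, b, rfl⟩
    exact ⟨(a, b), rfl⟩

noncomputable def emap (hn : 0 < n) : (ℤ × ℤ) ≃+ Odgrp n :=
  AddEquiv.ofBijective (gmap n) (gmap_bij n hn)

end DualLatticeAux

open DualLatticeAux in
/-- The dual lattice `O*` of `O_{n²} = {(x,y) ∈ ℤ² : x ≡ y mod n}` with respect to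
the trace form inside `ℚ × ℚ` is spanned over ℤ by `(1,0)` and `(1/n, −1/n)`;
moreover `O*/O_{n²} ≅ ℤ/n²ℤ` if `n` is odd, and `≅ ℤ/2ℤ ⊕ ℤ/(n²/2)ℤ` if `n` is even. -/
theorem dual_lattice_and_discriminant_group (n : ℕ) (hn : 0 < n) :
    ∃ OL Od : AddSubgroup (ℚ × ℚ),
      (OL : Set (ℚ × ℚ)) =
        {v | ∃ x y : ℤ, v = ((x : ℚ), (y : ℚ)) ∧ (n : ℤ) ∣ (x - y)} ∧
      (Od : Set (ℚ × ℚ)) =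
        {v | ∀ w ∈ (OL : Set (ℚ × ℚ)), ∃ k : ℤ, v.1 * w.1 + v.2 * w.2 = (k : ℚ)} ∧
      (Od : Set (ℚ × ℚ)) =
        {v | ∃ a b : ℤ, v = a • ((1 : ℚ), (0 : ℚ)) + b • ((1 / n : ℚ), -(1 / n : ℚ))} ∧
      (Odd n → Nonempty ((Od ⧸ (OL.addSubgroupOf Od)) ≃+ ZMod (n ^ 2))) ∧
      (Even n → Nonempty ((Od ⧸ (OL.addSubgroupOf Od)) ≃+ (ZMod 2 × ZMod (n ^ 2 / 2)))) := by
  have hn0 : (n : ℚ) ≠ 0 := by positivity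
  refine ⟨OLgrp n, Odgrp n, rfl, ?_, rfl, ?_, ?_⟩
  · -- dual description
    ext v
    constructor
    · rintro ⟨a, b, rfl⟩ w hw
      obtain ⟨x, y, rfl, t, ht⟩ := hw
      refine ⟨a * x + b * t, ?_⟩
      rw [vec_eq]
      have hq : (x : ℚ) - y = n * t := by exact_mod_cast ht
      push_cast
      field_simp
      linear_combination (b : ℚ) * hq
    · intro hv
      obtain ⟨v1, v2⟩ := v
      obtain ⟨k₁, hk1⟩ := hv ((1 : ℚ), (1 : ℚ)) ⟨1, 1, by norm_num, by norm_num⟩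
      obtain ⟨k₃, hk3⟩ := hv ((0 : ℚ), (n : ℚ)) ⟨0, n, by norm_num, by simp⟩
      simp only at hk1 hk3
      refine ⟨k₁, -k₃, ?_⟩
      rw [vec_eq, Prod.mk.injEq]
      have h2 : v2 = k₃ / n := by field_simp; linarith
      constructor
      · push_cast; rw [h2] at hk1; field_simp at hk1 ⊢; linarith
      · push_cast; rw [h2]; field_simp
  · -- odd case
    intro ho
    haveI : NeZero (n ^ 2) := ⟨by positivity⟩
    set ψ : Odgrp n →+ ZMod (n ^ 2) := (φodd n).comp (emap n hn).symm.toAddMonoidHom with hψ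
    have hsurj : Function.Surjective ψ := (φodd_surj n hn ho).comp (emap n hn).symm.surjective
    have hker : ψ.ker = (OLgrp n).addSubgroupOf (Odgrp n) := by
      ext x
      obtain ⟨p, rfl⟩ := (emap n hn).surjective x
      rw [AddMonoidHom.mem_ker, AddSubgroup.mem_addSubgroupOf]
      show φodd n ((emap n hn).symm (emap n hn p)) = 0 ↔ _
      rw [AddEquiv.symm_apply_apply, φodd_ker, odd_dvd_iff n ho]
      exact (mem_OL_iff n hn p.1 p.2).symm
    exact ⟨(QuotientAddGroup.quotientAddEquivOfEq hker.symm).trans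
      (QuotientAddGroup.quotientKerEquivOfSurjective ψ hsurj)⟩
  · -- even case
    intro he
    obtain ⟨m, hm⟩ := he
    have hm0 : 0 < m := by omega
    have hnm : (n : ℤ) = 2 * m := by exact_mod_cast (by omega : n = 2 * m)
    haveI : NeZero (2 * m ^ 2) := ⟨by positivity⟩
    have hdiv : n ^ 2 / 2 = 2 * m ^ 2 := by
      have h4 : n ^ 2 = 2 * (2 * m ^ 2) := by subst hm; ring
      rw [h4, Nat.mul_div_cancel_left _ (by norm_num)]
    rw [hdiv]
    set ψ : Odgrp n →+ ZMod 2 × ZMod (2 * m ^ 2) :=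
      (φeven m).comp (emap n hn).symm.toAddMonoidHom with hψ
    have hsurj : Function.Surjective ψ := (φeven_surj m hm0).comp (emap n hn).symm.surjective
    have hker : ψ.ker = (OLgrp n).addSubgroupOf (Odgrp n) := by
      ext x
      obtain ⟨p, rfl⟩ := (emap n hn).surjective x
      rw [AddMonoidHom.mem_ker, AddSubgroup.mem_addSubgroupOf]
      show φeven m ((emap n hn).symm (emap n hn p)) = 0 ↔ _
      rw [AddEquiv.symm_apply_apply, φeven_ker, even_dvd_iff m]
      constructor
      · rintro ⟨c, hc, hd⟩
        exact (mem_OL_iff n hn p.1 p.2).mpr ⟨c, by rw [hnm]; exact hc, by rw [hnm]; exact hd⟩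
      · rintro h
        obtain ⟨c, hc, hd⟩ := (mem_OL_iff n hn p.1 p.2).mp h
        exact ⟨c, by rw [← hnm]; exact hc, by rw [← hnm]; exact hd⟩
    exact ⟨(QuotientAddGroup.quotientAddEquivOfEq hker.symm).trans
      (QuotientAddGroup.quotientKerEquivOfSurjective ψ hsurj)⟩
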